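/- Let M be an m×m symmetric matrix satisfying (1+ζ/2)^{-1} I ⪯ M ⪯ (1−ζ/2)^{-1} I for ζ ∈ [0,1), and let α be a scalar with |α − 1| ≤ ζ(1−ζ)/2. Then ‖I − αM‖₂ ≤ ζ. -/

import Mathlib

open Matrix

noncomputable def specNorm {m n : ℕ} (A : Matrix (Fin m) (Fin n) ℝ) : ℝ :=
  ‖LinearMap.toContinuousLinearMap (Matrix.toEuclideanLin A)‖

noncomputable def euclNorm {n : ℕ} (v : Fin n → ℝ) : ℝ := Real.sqrt (∑ i, (v i)^2)

noncomputable def frobNorm {m n : ℕ} (A : Matrix (Fin m) (Fin n) ℝ) : ℝ :=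
  Real.sqrt (∑ i, ∑ j, (A i j)^2)

private lemma expand_quad {m : ℕ} (B : Matrix (Fin m) (Fin m) ℝ) (a b : Fin m → ℝ) (c d : ℝ) :
    (c • a + d • b) ⬝ᵥ B *ᵥ (c • a + d • b)
      = c^2 * (a ⬝ᵥ B *ᵥ a) + c*d*(a ⬝ᵥ B *ᵥ b) + c*d*(b ⬝ᵥ B *ᵥ a) + d^2 * (b ⬝ᵥ B *ᵥ b) := by
  simp only [Matrix.mulVec_add, Matrix.mulVec_smul, dotProduct_add, add_dotProduct,
    dotProduct_smul, smul_dotProduct, smul_eq_mul]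
  ring

private lemma expand_dot {m : ℕ} (a b : Fin m → ℝ) (c d : ℝ) :
    (c • a + d • b) ⬝ᵥ (c • a + d • b)
      = c^2 * (a ⬝ᵥ a) + 2*c*d*(a ⬝ᵥ b) + d^2 * (b ⬝ᵥ b) := by
  simp only [dotProduct_add, add_dotProduct, dotProduct_smul, smul_dotProduct, smul_eq_mul,
    dotProduct_comm b a]
  ring

private lemma dot_self_nonneg {m : ℕ} (a : Fin m → ℝ) : 0 ≤ a ⬝ᵥ a :=
  Finset.sum_nonneg fun i _ => mul_self_nonneg _

theorem stmt16 {m : ℕ} (M : Matrix (Fin m) (Fin m) ℝ) (ζ α : ℝ)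
    (hζ0 : 0 ≤ ζ) (hζ1 : ζ < 1)
    (hsym : M.IsHermitian)
    (h1 : (M - (1 + ζ/2)⁻¹ • (1 : Matrix (Fin m) (Fin m) ℝ)).PosSemidef)
    (h2 : ((1 - ζ/2)⁻¹ • (1 : Matrix (Fin m) (Fin m) ℝ) - M).PosSemidef)
    (hα : |α - 1| ≤ ζ * (1 - ζ) / 2) :
    specNorm ((1 : Matrix (Fin m) (Fin m) ℝ) - α • M) ≤ ζ := by
  set A : Matrix (Fin m) (Fin m) ℝ := (1 : Matrix (Fin m) (Fin m) ℝ) - α • M with hAdef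
  have h1p : (0:ℝ) < 1 + ζ/2 := by linarith
  have h2p : (0:ℝ) < 1 - ζ/2 := by linarith
  have hα' := abs_le.mp hα
  -- symmetry of M and A
  have hMT : Mᵀ = M := by
    ext i j
    have := congrFun (congrFun hsym.eq i) j
    simpa using this
  have hAT : Aᵀ = A := by
    rw [hAdef, Matrix.transpose_sub, Matrix.transpose_one, Matrix.transpose_smul, hMT]
  have hsymB : ∀ a b : Fin m → ℝ, a ⬝ᵥ A *ᵥ b = b ⬝ᵥ A *ᵥ a := by
    intro a b
    calc a ⬝ᵥ A *ᵥ b = (a ᵥ* A) ⬝ᵥ b := dotProduct_mulVec _ _ _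
      _ = (Aᵀ *ᵥ a) ⬝ᵥ b := by rw [Matrix.mulVec_transpose]
      _ = (A *ᵥ a) ⬝ᵥ b := by rw [hAT]
      _ = b ⬝ᵥ (A *ᵥ a) := dotProduct_comm _ _
  -- quadratic form bound
  have hQ : ∀ z : Fin m → ℝ, |z ⬝ᵥ A *ᵥ z| ≤ ζ * (z ⬝ᵥ z) := by
    intro z
    have hs : 0 ≤ z ⬝ᵥ z := dot_self_nonneg z
    have e1 : (1 + ζ/2)⁻¹ * (z ⬝ᵥ z) ≤ z ⬝ᵥ M *ᵥ z := by
      have := h1.dotProduct_mulVec_nonneg z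
      simpa [Matrix.sub_mulVec, Matrix.smul_mulVec, Matrix.one_mulVec,
        dotProduct_sub, dotProduct_smul, smul_eq_mul, sub_nonneg] using this
    have e2 : z ⬝ᵥ M *ᵥ z ≤ (1 - ζ/2)⁻¹ * (z ⬝ᵥ z) := by
      have := h2.dotProduct_mulVec_nonneg z
      simpa [Matrix.sub_mulVec, Matrix.smul_mulVec, Matrix.one_mulVec,
        dotProduct_sub, dotProduct_smul, smul_eq_mul, sub_nonneg] using this
    set s := z ⬝ᵥ z
    set q := z ⬝ᵥ M *ᵥ z
    have e1' : s ≤ (1 + ζ/2) * q := by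
      have h := mul_le_mul_of_nonneg_left e1 h1p.le
      rwa [← mul_assoc, mul_inv_cancel₀ h1p.ne', one_mul] at h
    have e2' : (1 - ζ/2) * q ≤ s := by
      have h := mul_le_mul_of_nonneg_left e2 h2p.le
      rwa [← mul_assoc, mul_inv_cancel₀ h2p.ne', one_mul] at h
    have hq : 0 ≤ q := by nlinarith
    have hQz : z ⬝ᵥ A *ᵥ z = s - α * q := by
      rw [hAdef]
      simp [Matrix.sub_mulVec, Matrix.smul_mulVec, Matrix.one_mulVec,
        dotProduct_sub, dotProduct_smul, smul_eq_mul, s, q]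
    rw [hQz, abs_le]
    constructor
    · nlinarith [hα'.1, hα'.2, mul_nonneg hζ0 hq, mul_nonneg (mul_nonneg hζ0 hζ0) hq]
    · nlinarith [hα'.1, hα'.2, mul_nonneg hζ0 hq, mul_nonneg (mul_nonneg hζ0 hζ0) hq,
        mul_nonneg (sub_nonneg.mpr hζ1.le) hs]
  -- norm bound for each vector
  have hvec : ∀ x : Fin m → ℝ,
      Real.sqrt ((A *ᵥ x) ⬝ᵥ (A *ᵥ x)) ≤ ζ * Real.sqrt (x ⬝ᵥ x) := by
    intro x
    set y := A *ᵥ x with hy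
    set s := Real.sqrt (x ⬝ᵥ x) with hsdef
    set t := Real.sqrt (y ⬝ᵥ y) with htdef
    have hs0 : 0 ≤ s := Real.sqrt_nonneg _
    have ht0 : 0 ≤ t := Real.sqrt_nonneg _
    have hs2 : s^2 = x ⬝ᵥ x := Real.sq_sqrt (dot_self_nonneg x)
    have ht2 : t^2 = y ⬝ᵥ y := Real.sq_sqrt (dot_self_nonneg y)
    rcases eq_or_lt_of_le ht0 with ht | ht
    · rw [← ht]; exact mul_nonneg hζ0 hs0
    have hspos : 0 < s := by
      rcases eq_or_lt_of_le hs0 with hs | hs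
      · exfalso
        have hx0 : x ⬝ᵥ x = 0 := by rw [← hs2, ← hs]; ring
        have hx : x = 0 := dotProduct_self_eq_zero.mp hx0
        have hy0 : y = 0 := by rw [hy, hx, Matrix.mulVec_zero]
        have ht' : t = 0 := by rw [htdef, hy0]; simp
        linarith
      · exact hs
    -- polarization
    have hBxy : x ⬝ᵥ A *ᵥ y = y ⬝ᵥ y := by rw [hsymB x y, ← hy]
    have hByx : y ⬝ᵥ A *ᵥ x = y ⬝ᵥ y := by rw [← hy]
    have hu := abs_le.mp (hQ (t • x + s • y))
    have hv := abs_le.mp (hQ (t • x + (-s) • y))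
    rw [expand_quad, expand_dot] at hu hv
    rw [hBxy, hByx] at hu hv
    set p := x ⬝ᵥ y
    set Qx := x ⬝ᵥ A *ᵥ x
    rw [← hs2, ← ht2] at hu hv
    have key : 4*s*t*t^2 ≤ 4*ζ*(s^2)*(t^2) := by nlinarith [hu.2, hv.1]
    nlinarith [key, mul_pos hspos ht, mul_pos (mul_pos hspos ht) ht, sq_nonneg (t - ζ*s)]
  -- conclude
  rw [specNorm]
  apply ContinuousLinearMap.opNorm_le_bound _ hζ0
  intro x
  rw [LinearMap.coe_toContinuousLinearMap', Matrix.toEuclideanLin_apply]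
  have norm_eq : ∀ v : Fin m → ℝ,
      ‖(WithLp.equiv 2 (Fin m → ℝ)).symm v‖ = Real.sqrt (v ⬝ᵥ v) := by
    intro v
    rw [EuclideanSpace.norm_eq]
    congr 1
    simp [dotProduct, sq, Real.norm_eq_abs, abs_mul_abs_self, pow_two]
  have hx : x = (WithLp.equiv 2 (Fin m → ℝ)).symm ((WithLp.equiv 2 (Fin m → ℝ)) x) := rfl
  have h3 := norm_eq (A *ᵥ x.ofLp)
  have h4 := norm_eq x.ofLp
  exact (h3.trans_le (hvec _)).trans_eq (by rw [← h4]; rfl)
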